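/- Let p be a prime ideal of O_F and (-D, a) a discriminant pair in K = F(√(-D)). Then (-D, p·a) is also a discriminant. Conversely, if p does not divide 2, D ∈ a⁻², and (-D, p·a) is a discriminant, then (-D, a) is a discriminant. -/

import Mathlib

open scoped NumberField nonZeroDivisors

/-- `disc(ω) = tr(ω)² − 4·N(ω)` for `ω` in a quadratic extension `K/F`. -/
noncomputable def discEl (F K : Type*) [Field F] [Field K] [Algebra F K] (ω : K) : F :=
  (Algebra.trace F K ω) ^ 2 - 4 * (Algebra.norm F ω)

/-- The `𝓞 F`-submodule `O_F ⊕ aω` of `K` (as the span of `1` and `a·ω`). -/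
noncomputable def pairSubmodule (F K : Type*) [Field F] [NumberField F] [Field K]
    [Algebra F K] (a : FractionalIdeal (𝓞 F)⁰ F) (ω : K) : Submodule (𝓞 F) K :=
  Submodule.span (𝓞 F)
    (insert (1 : K) ((fun b : F => algebraMap F K b * ω) '' (a : Set F)))

/-- An `𝓞 F`-submodule of `K` is an order if it contains `1`, is closed under
multiplication, and spans `K` over `F`. -/
def IsOrderSub (F K : Type*) [Field F] [NumberField F] [Field K] [Algebra F K]
    (O : Submodule (𝓞 F) K) : Prop :=
  (1 : K) ∈ O ∧ (∀ x ∈ O, ∀ y ∈ O, x * y ∈ O) ∧ Submodule.span F (O : Set K) = ⊤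

/-- `(-D, a)` is a discriminant: some `ω` with `disc(ω) = -D` makes `O_F ⊕ aω` an order. -/
def IsDiscPair (F K : Type*) [Field F] [NumberField F] [Field K] [Algebra F K]
    (D : F) (a : FractionalIdeal (𝓞 F)⁰ F) : Prop :=
  ∃ ω : K, discEl F K ω = -D ∧ IsOrderSub F K (pairSubmodule F K a ω)

/-- A field element is totally positive if all real embeddings are positive. -/
def TotPos (F : Type*) [Field F] (D : F) : Prop := ∀ φ : F →+* ℝ, 0 < φ D

section Aux

variable {F K : Type*} [Field F] [NumberField F] [Field K] [Algebra F K]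

omit [NumberField F] in
lemma li_one_omega {ω : K} (hω : ω ∉ Set.range (algebraMap F K)) :
    LinearIndependent F ![(1 : K), ω] := by
  rw [linearIndependent_fin2]
  refine ⟨?_, fun c hc => ?_⟩
  · show ω ≠ 0
    rintro rfl; exact hω ⟨0, by simp⟩
  · show False
    simp only [Matrix.cons_val_one, Matrix.head_cons, Matrix.cons_val_zero] at hc
    have hc0 : c ≠ 0 := by rintro rfl; simp at hc
    refine hω ⟨c⁻¹, ?_⟩
    rw [map_inv₀]
    field_simp [Algebra.smul_def] at hc ⊢
    rw [eq_comm, eq_div_iff ((map_ne_zero _).mpr hc0), mul_comm]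
    rwa [Algebra.smul_def] at hc

omit [NumberField F] in
lemma sq_eq_tr_sub_norm (hrank : Module.finrank F K = 2) (ω : K) :
    ω ^ 2 = algebraMap F K (Algebra.trace F K ω) * ω - algebraMap F K (Algebra.norm F ω) := by
  have : FiniteDimensional F K := FiniteDimensional.of_finrank_pos (by omega)
  by_cases hω : ω ∈ Set.range (algebraMap F K)
  · obtain ⟨x, rfl⟩ := hω
    rw [Algebra.trace_algebraMap, Algebra.norm_algebraMap, hrank]
    rw [← map_pow, ← map_mul, ← map_sub]
    congr 1
    ring
  · have hli := li_one_omega (F := F) hω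
    let B := basisOfLinearIndependentOfCardEqFinrank hli (by simp [hrank])
    have hB : ⇑B = ![(1:K), ω] := coe_basisOfLinearIndependentOfCardEqFinrank _ _
    have hB0 : B 0 = 1 := by rw [hB]; rfl
    have hB1 : B 1 = ω := by rw [hB]; rfl
    have htr : Algebra.trace F K ω = B.repr (ω ^ 2) 1 := by
      rw [Algebra.trace_eq_matrix_trace B, Matrix.trace_fin_two]
      simp only [Algebra.leftMulMatrix_eq_repr_mul, hB0, hB1, mul_one, ← sq]
      rw [← hB1, B.repr_self]
      simp
    have hnorm : Algebra.norm F ω = -(B.repr (ω ^ 2) 0) := by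
      rw [Algebra.norm_eq_matrix_det B, Matrix.det_fin_two]
      simp only [Algebra.leftMulMatrix_eq_repr_mul, hB0, hB1, mul_one, ← sq]
      rw [← hB1, B.repr_self]
      simp
    have hrepr := B.sum_repr (ω ^ 2)
    rw [Fin.sum_univ_two, hB0, hB1] at hrepr
    rw [htr, hnorm, map_neg]
    nth_rewrite 1 [← hrepr]
    rw [Algebra.smul_def, Algebra.smul_def]
    ring

omit [NumberField F] in
lemma repr_unique {ω : K} (hω : ω ∉ Set.range (algebraMap F K)) {r r' c c' : F}
    (h : algebraMap F K r + algebraMap F K c * ω = algebraMap F K r' + algebraMap F K c' * ω) :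
    r = r' ∧ c = c' := by
  have hinj := (algebraMap F K).injective
  by_cases hc : c = c'
  · subst hc
    exact ⟨hinj (add_right_cancel h), rfl⟩
  · exfalso
    refine hω ⟨(r - r') / (c' - c), ?_⟩
    have hcc : algebraMap F K (c' - c) ≠ 0 :=
      (map_ne_zero _).mpr (sub_ne_zero.mpr (Ne.symm hc))
    rw [map_div₀, div_eq_iff hcc, map_sub, map_sub]
    linear_combination h

lemma fi_add_mem {a : FractionalIdeal (𝓞 F)⁰ F} {x y : F} (hx : x ∈ a) (hy : y ∈ a) :
    x + y ∈ a :=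
  FractionalIdeal.mem_coe.mp
    (Submodule.add_mem _ (FractionalIdeal.mem_coe.mpr hx) (FractionalIdeal.mem_coe.mpr hy))

lemma fi_smul_mem {a : FractionalIdeal (𝓞 F)⁰ F} {x : F} (r : 𝓞 F) (hx : x ∈ a) :
    algebraMap (𝓞 F) F r * x ∈ a := by
  have := Submodule.smul_mem (a : Submodule (𝓞 F) F) r (FractionalIdeal.mem_coe.mpr hx)
  rw [Algebra.smul_def] at this
  exact FractionalIdeal.mem_coe.mp this

lemma one_mul_mem {x y : F} (hx : x ∈ (1 : FractionalIdeal (𝓞 F)⁰ F))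
    (hy : y ∈ (1 : FractionalIdeal (𝓞 F)⁰ F)) :
    x * y ∈ (1 : FractionalIdeal (𝓞 F)⁰ F) := by
  obtain ⟨r, rfl⟩ := FractionalIdeal.mem_one_iff _ |>.mp hx
  obtain ⟨r', rfl⟩ := FractionalIdeal.mem_one_iff _ |>.mp hy
  exact FractionalIdeal.mem_one_iff _ |>.mpr ⟨r * r', map_mul _ _ _⟩

lemma mem_of_mem_pa {p : Ideal (𝓞 F)} {a : FractionalIdeal (𝓞 F)⁰ F} {x : F}
    (hx : x ∈ (p : FractionalIdeal (𝓞 F)⁰ F) * a) : x ∈ a := by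
  refine FractionalIdeal.mul_induction_on hx ?_ ?_
  · rintro i hi j hj
    obtain ⟨r, _, rfl⟩ := FractionalIdeal.mem_coeIdeal _ |>.mp hi
    exact fi_smul_mem r hj
  · intro u v hu hv
    exact fi_add_mem hu hv

lemma mem_pairSubmodule_iff {a : FractionalIdeal (𝓞 F)⁰ F} {ω : K} {x : K} :
    x ∈ pairSubmodule F K a ω ↔
      ∃ r : 𝓞 F, ∃ c ∈ a, x = algebraMap F K (algebraMap (𝓞 F) F r)
        + algebraMap F K c * ω := by
  constructor
  · intro hx
    induction hx using Submodule.span_induction with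
    | mem z hz =>
      rcases hz with rfl | ⟨b, hb, rfl⟩
      · exact ⟨1, 0, a.zero_mem, by simp⟩
      · exact ⟨0, b, by simpa using hb, by simp⟩
    | zero => exact ⟨0, 0, a.zero_mem, by simp⟩
    | add y z _ _ hy hz =>
      obtain ⟨r1, c1, hc1, rfl⟩ := hy
      obtain ⟨r2, c2, hc2, rfl⟩ := hz
      exact ⟨r1 + r2, c1 + c2, fi_add_mem hc1 hc2, by push_cast; ring⟩
    | smul m y _ hy =>
      obtain ⟨r1, c1, hc1, rfl⟩ := hy
      refine ⟨m * r1, algebraMap (𝓞 F) F m * c1, fi_smul_mem m hc1, ?_⟩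
      rw [Algebra.smul_def, IsScalarTower.algebraMap_apply (𝓞 F) F K]
      push_cast
      ring
  · rintro ⟨r, c, hc, rfl⟩
    refine Submodule.add_mem _ ?_ ?_
    · have h1 : (1 : K) ∈ pairSubmodule F K a ω :=
        Submodule.subset_span (Set.mem_insert _ _)
      have := Submodule.smul_mem (pairSubmodule F K a ω) r h1
      rwa [Algebra.smul_def, mul_one, IsScalarTower.algebraMap_apply (𝓞 F) F K] at this
    · exact Submodule.subset_span (Set.mem_insert_of_mem _ ⟨c, hc, rfl⟩)

lemma span_top_extract (hrank : Module.finrank F K = 2)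
    {a : FractionalIdeal (𝓞 F)⁰ F} {ω : K}
    (h : Submodule.span F ((pairSubmodule F K a ω : Submodule (𝓞 F) K) : Set K) = ⊤) :
    a ≠ 0 ∧ ω ∉ Set.range (algebraMap F K) := by
  have key : ∀ (_ : a = 0 ∨ ω ∈ Set.range (algebraMap F K)), False := by
    intro hcase
    have hsub : (insert (1 : K) ((fun b : F => algebraMap F K b * ω) '' (a : Set F)))
        ⊆ (LinearMap.range (Algebra.linearMap F K) : Set K) := by
      rintro x (rfl | ⟨b, hb, rfl⟩)
      · exact ⟨1, by simp⟩
      · rcases hcase with rfl | ⟨u, rfl⟩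
        · have hb0 : b = 0 := by
            have : b ∈ (0 : FractionalIdeal (𝓞 F)⁰ F) := hb
            exact FractionalIdeal.mem_zero_iff _ |>.mp this
          exact ⟨0, by simp [hb0]⟩
        · exact ⟨b * u, by simp⟩
    have h1 : pairSubmodule F K a ω ≤
        (LinearMap.range (Algebra.linearMap F K)).restrictScalars (𝓞 F) :=
      Submodule.span_le.mpr hsub
    have h2 : Submodule.span F ((pairSubmodule F K a ω : Submodule (𝓞 F) K) : Set K)
        ≤ LinearMap.range (Algebra.linearMap F K) := Submodule.span_le.mpr h1
    rw [h] at h2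
    have := Submodule.finrank_mono h2
    rw [finrank_top, hrank] at this
    have hle := LinearMap.finrank_range_le (Algebra.linearMap F K)
    rw [Module.finrank_self] at hle
    omega
  exact ⟨fun ha => key (Or.inl ha), fun hω => key (Or.inr hω)⟩

lemma span_top_construct (hrank : Module.finrank F K = 2)
    {a : FractionalIdeal (𝓞 F)⁰ F} {ω : K} (ha : a ≠ 0)
    (hω : ω ∉ Set.range (algebraMap F K)) :
    Submodule.span F ((pairSubmodule F K a ω : Submodule (𝓞 F) K) : Set K) = ⊤ := by
  have : FiniteDimensional F K := FiniteDimensional.of_finrank_pos (by omega)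
  obtain ⟨b, hb, hb0⟩ : ∃ b ∈ a, b ≠ 0 := by
    by_contra hcon
    push_neg at hcon
    exact ha (by
      ext x
      simp only [FractionalIdeal.mem_zero_iff]
      exact ⟨fun hx => hcon x hx, fun hx => hx ▸ a.zero_mem⟩)
  have h1 : (1 : K) ∈ Submodule.span F ((pairSubmodule F K a ω : Submodule (𝓞 F) K) : Set K) :=
    Submodule.subset_span (Submodule.subset_span (Set.mem_insert _ _))
  have h2 : algebraMap F K b * ω ∈
      Submodule.span F ((pairSubmodule F K a ω : Submodule (𝓞 F) K) : Set K) :=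
    Submodule.subset_span (Submodule.subset_span (Set.mem_insert_of_mem _ ⟨b, hb, rfl⟩))
  have hωmem : ω ∈ Submodule.span F ((pairSubmodule F K a ω : Submodule (𝓞 F) K) : Set K) := by
    have := Submodule.smul_mem _ b⁻¹ h2
    rwa [Algebra.smul_def, map_inv₀, ← mul_assoc, inv_mul_cancel₀
      ((map_ne_zero _).mpr hb0), one_mul] at this
  have hli : LinearIndependent F ![(1 : K), ω] := li_one_omega hω
  have hspan : Submodule.span F (Set.range ![(1:K), ω]) = ⊤ := by
    apply Submodule.eq_top_of_finrank_eq
    rw [finrank_span_eq_card hli, hrank]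
    simp
  rw [eq_top_iff, ← hspan]
  apply Submodule.span_le.mpr
  rintro x ⟨i, rfl⟩
  fin_cases i
  · exact h1
  · exact hωmem

lemma order_of_conds (hrank : Module.finrank F K = 2)
    {a : FractionalIdeal (𝓞 F)⁰ F} {ω : K} {t n : F} (ha : a ≠ 0)
    (hω : ω ∉ Set.range (algebraMap F K))
    (hrel : ω ^ 2 = algebraMap F K t * ω - algebraMap F K n)
    (h1 : ∀ b ∈ a, ∀ c ∈ a, t * b * c ∈ a)
    (h2 : ∀ b ∈ a, ∀ c ∈ a, n * b * c ∈ (1 : FractionalIdeal (𝓞 F)⁰ F)) :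
    IsOrderSub F K (pairSubmodule F K a ω) := by
  refine ⟨Submodule.subset_span (Set.mem_insert _ _), ?_, span_top_construct hrank ha hω⟩
  intro x hx y hy
  obtain ⟨r1, b1, hb1, rfl⟩ := mem_pairSubmodule_iff.mp hx
  obtain ⟨r2, b2, hb2, rfl⟩ := mem_pairSubmodule_iff.mp hy
  obtain ⟨r3, hr3⟩ := FractionalIdeal.mem_one_iff _ |>.mp (h2 b1 hb1 b2 hb2)
  refine mem_pairSubmodule_iff.mpr
    ⟨r1 * r2 - r3,
     algebraMap (𝓞 F) F r1 * b2 + algebraMap (𝓞 F) F r2 * b1 + t * b1 * b2, ?_, ?_⟩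
  · exact fi_add_mem (fi_add_mem (fi_smul_mem r1 hb2) (fi_smul_mem r2 hb1)) (h1 b1 hb1 b2 hb2)
  · have hr3K : algebraMap F K (algebraMap (𝓞 F) F r3)
        = algebraMap F K n * algebraMap F K b1 * algebraMap F K b2 := by
      rw [hr3, map_mul, map_mul]
    simp only [map_add, map_mul, map_sub]
    linear_combination (algebraMap F K b1 * algebraMap F K b2) * hrel + hr3K

lemma conds_of_order
    {a : FractionalIdeal (𝓞 F)⁰ F} {ω : K} {t n : F}
    (hω : ω ∉ Set.range (algebraMap F K))
    (hrel : ω ^ 2 = algebraMap F K t * ω - algebraMap F K n)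
    (horder : IsOrderSub F K (pairSubmodule F K a ω)) :
    ∀ b ∈ a, ∀ c ∈ a, t * b * c ∈ a ∧
      n * b * c ∈ (1 : FractionalIdeal (𝓞 F)⁰ F) := by
  intro b hb c hc
  have hxb : algebraMap F K b * ω ∈ pairSubmodule F K a ω :=
    mem_pairSubmodule_iff.mpr ⟨0, b, hb, by simp⟩
  have hxc : algebraMap F K c * ω ∈ pairSubmodule F K a ω :=
    mem_pairSubmodule_iff.mpr ⟨0, c, hc, by simp⟩
  obtain ⟨r, c', hc', heq⟩ := mem_pairSubmodule_iff.mp (horder.2.1 _ hxb _ hxc)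
  have heq2 : algebraMap F K (-(n * b * c)) + algebraMap F K (t * b * c) * ω
      = algebraMap F K (algebraMap (𝓞 F) F r) + algebraMap F K c' * ω := by
    simp only [map_neg, map_mul]
    linear_combination heq - (algebraMap F K b * algebraMap F K c) * hrel
  obtain ⟨key1, key2⟩ := repr_unique hω heq2
  refine ⟨key2 ▸ hc', FractionalIdeal.mem_one_iff _ |>.mpr ⟨-r, ?_⟩⟩
  rw [map_neg, ← key1, neg_neg]

end Aux
/-- If `(-D, a)` is a discriminant then so is `(-D, p·a)`; conversely,
if `p ∤ 2` and `D ∈ a⁻²` and `(-D, p·a)` is a discriminant, then so is `(-D, a)`. -/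
theorem discriminant_pair_mul_prime
    (F K : Type*) [Field F] [NumberField F] [Field K] [NumberField K] [Algebra F K]
    (D : F) (hD : TotPos F D)
    (hrank : Module.finrank F K = 2)
    (hsq : ∃ s : K, s ^ 2 = algebraMap F K (-D))
    (a : FractionalIdeal (𝓞 F)⁰ F)
    (p : Ideal (𝓞 F)) (hp : p.IsPrime) (hp0 : p ≠ ⊥) :
    (IsDiscPair F K D a →
      IsDiscPair F K D ((p : FractionalIdeal (𝓞 F)⁰ F) * a)) ∧
    ((2 : 𝓞 F) ∉ p → D ∈ (a⁻¹ * a⁻¹ : FractionalIdeal (𝓞 F)⁰ F) →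
      IsDiscPair F K D ((p : FractionalIdeal (𝓞 F)⁰ F) * a) →
      IsDiscPair F K D a) := by
  constructor
  · -- forward direction
    rintro ⟨ω, hdisc, horder⟩
    obtain ⟨ha, hω⟩ := span_top_extract hrank horder.2.2
    have hrel := sq_eq_tr_sub_norm hrank ω
    have conds := conds_of_order hω hrel horder
    have hpa0 : (p : FractionalIdeal (𝓞 F)⁰ F) * a ≠ 0 :=
      mul_ne_zero (FractionalIdeal.coeIdeal_ne_zero.mpr hp0) ha
    refine ⟨ω, hdisc, order_of_conds hrank hpa0 hω hrel ?_ ?_⟩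
    · intro b hb c hc
      have hc' : c ∈ a := mem_of_mem_pa hc
      refine FractionalIdeal.mul_induction_on
        (C := fun z => Algebra.trace F K ω * z * c ∈ (p : FractionalIdeal (𝓞 F)⁰ F) * a)
        hb (fun i hi j hj => ?_) (fun u v hu hv => ?_)
      · have hm := FractionalIdeal.mul_mem_mul hi ((conds j hj c hc').1)
        show Algebra.trace F K ω * (i * j) * c ∈ (p : FractionalIdeal (𝓞 F)⁰ F) * a
        have heqx : Algebra.trace F K ω * (i * j) * c
            = i * (Algebra.trace F K ω * j * c) := by ring
        rw [heqx]; exact hm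
      · show Algebra.trace F K ω * (u + v) * c ∈ (p : FractionalIdeal (𝓞 F)⁰ F) * a
        have heqx : Algebra.trace F K ω * (u + v) * c
            = Algebra.trace F K ω * u * c + Algebra.trace F K ω * v * c := by ring
        rw [heqx]; exact fi_add_mem hu hv
    · intro b hb c hc
      exact (conds b (mem_of_mem_pa hb) c (mem_of_mem_pa hc)).2
  · -- backward direction
    rintro h2p hDa ⟨ω, hdisc, horder⟩
    obtain ⟨hpa0, hω⟩ := span_top_extract hrank horder.2.2
    have ha : a ≠ 0 := fun h => hpa0 (by rw [h, mul_zero])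
    have hrel := sq_eq_tr_sub_norm hrank ω
    have conds := conds_of_order hω hrel horder
    set t := Algebra.trace F K ω with ht
    set n := Algebra.norm F ω with hn
    have hdiscF : t ^ 2 - 4 * n = -D := hdisc
    clear_value t n
    -- the coprimality gymnastics
    have pmax : p.IsMaximal := hp.isMaximal hp0
    have hsup : p ⊔ Ideal.span {(2 : 𝓞 F)} = ⊤ := by
      refine pmax.out.2 _ (lt_of_le_of_ne le_sup_left (fun he => h2p ?_))
      have h2mem : (2 : 𝓞 F) ∈ p ⊔ Ideal.span {(2 : 𝓞 F)} :=
        Submodule.mem_sup_right (Ideal.mem_span_singleton_self 2)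
      rwa [← he] at h2mem
    have hone : (1 : 𝓞 F) ∈ p ⊔ Ideal.span {(2 : 𝓞 F)} := hsup ▸ Submodule.mem_top
    obtain ⟨x, hx, w, hw, hxw⟩ := Submodule.mem_sup.mp hone
    obtain ⟨v, hv⟩ := Ideal.mem_span_singleton'.mp hw
    have h1 : (1 : 𝓞 F) = x + v * 2 := by rw [← hxw, hv]
    set lam : 𝓞 F := x * (x + 4 * v) with hlamdef
    have hlam : lam ∈ p := Ideal.mul_mem_right _ _ hx
    have hlam2 : lam ^ 2 ∈ p := by rw [sq]; exact Ideal.mul_mem_right _ _ hlam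
    have hlam1 : (1 : 𝓞 F) = lam + 4 * v ^ 2 := by
      rw [hlamdef]; linear_combination (1 + x + v * 2) * h1
    clear_value lam
    set lamF : F := algebraMap (𝓞 F) F lam with hlamF
    set vF : F := algebraMap (𝓞 F) F v with hvF
    clear_value lamF vF
    have h1F : (1 : F) = lamF + 4 * vF ^ 2 := by
      have h' := congrArg (algebraMap (𝓞 F) F) hlam1
      rw [map_one, map_add, map_mul, map_pow, map_ofNat, ← hlamF, ← hvF] at h'
      exact h'
    -- the new generator
    set t' : F := lamF ^ 2 * t with ht'
    set n' : F := (t' ^ 2 + D) / 4 with hn'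
    set s : K := 2 * ω - algebraMap F K t with hs
    clear_value t' n' s
    have hdiscK : algebraMap F K t ^ 2 - 4 * algebraMap F K n = -(algebraMap F K D) := by
      have := congrArg (algebraMap F K) hdiscF
      rw [map_sub, map_mul, map_pow, map_neg, map_ofNat] at this
      exact this
    have hs2 : s ^ 2 = -(algebraMap F K D) := by
      rw [hs]; linear_combination 4 * hrel + hdiscK
    have hsnot : s ∉ Set.range (algebraMap F K) := by
      rintro ⟨z, hz⟩
      refine hω ⟨(z + t) / 2, ?_⟩
      rw [map_div₀, map_add, map_ofNat, hz, hs]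
      ring
    set ω' : K := (algebraMap F K t' + s) / 2 with hω'
    clear_value ω'
    have hω'not : ω' ∉ Set.range (algebraMap F K) := by
      rintro ⟨z, hz⟩
      refine hsnot ⟨2 * z - t', ?_⟩
      rw [map_sub, map_mul, map_ofNat, hz, hω']
      ring
    have hrel' : ω' ^ 2 = algebraMap F K t' * ω' - algebraMap F K n' := by
      have hn'map : algebraMap F K n' = (algebraMap F K t' ^ 2 + algebraMap F K D) / 4 := by
        rw [hn', map_div₀, map_add, map_pow, map_ofNat]
      rw [hω', hn'map]
      linear_combination hs2 / 4
    have hrelω' := sq_eq_tr_sub_norm hrank ω'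
    have heqq : algebraMap F K (-n') + algebraMap F K t' * ω'
        = algebraMap F K (-(Algebra.norm F ω')) + algebraMap F K (Algebra.trace F K ω') * ω' := by
      rw [map_neg, map_neg]
      linear_combination hrelω' - hrel'
    obtain ⟨e1, e2⟩ := repr_unique hω'not heqq
    have e1' : Algebra.norm F ω' = n' := (neg_injective e1).symm
    have hdisc' : discEl F K ω' = -D := by
      show (Algebra.trace F K ω') ^ 2 - 4 * (Algebra.norm F ω') = -D
      rw [← e2, e1', hn']
      ring
    refine ⟨ω', hdisc', order_of_conds hrank ha hω'not hrel' ?_ ?_⟩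
    · -- first condition
      intro b hb c hc
      have hlb : lamF * b ∈ (p : FractionalIdeal (𝓞 F)⁰ F) * a :=
        FractionalIdeal.mul_mem_mul
          (FractionalIdeal.mem_coeIdeal _ |>.mpr ⟨lam, hlam, hlamF.symm⟩) hb
      have hlc : lamF * c ∈ (p : FractionalIdeal (𝓞 F)⁰ F) * a :=
        FractionalIdeal.mul_mem_mul
          (FractionalIdeal.mem_coeIdeal _ |>.mpr ⟨lam, hlam, hlamF.symm⟩) hc
      have hm := (conds _ hlb _ hlc).1
      have heqx : t' * b * c = t * (lamF * b) * (lamF * c) := by rw [ht']; ring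
      rw [heqx]
      exact mem_of_mem_pa hm
    · -- second condition
      intro b hb c hc
      have hl2b : lamF ^ 2 * b ∈ (p : FractionalIdeal (𝓞 F)⁰ F) * a :=
        FractionalIdeal.mul_mem_mul
          (FractionalIdeal.mem_coeIdeal _ |>.mpr ⟨lam ^ 2, hlam2, by rw [map_pow, ← hlamF]⟩) hb
      have hl2c : lamF ^ 2 * c ∈ (p : FractionalIdeal (𝓞 F)⁰ F) * a :=
        FractionalIdeal.mul_mem_mul
          (FractionalIdeal.mem_coeIdeal _ |>.mpr ⟨lam ^ 2, hlam2, by rw [map_pow, ← hlamF]⟩) hc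
      have hm2 := (conds _ hl2b _ hl2c).2
      have hD1 : D * b * c ∈ (1 : FractionalIdeal (𝓞 F)⁰ F) := by
        refine FractionalIdeal.mul_induction_on
          (C := fun z => z * b * c ∈ (1 : FractionalIdeal (𝓞 F)⁰ F))
          hDa (fun i hi j hj => ?_) (fun u v' hu hv' => ?_)
        · show i * j * b * c ∈ (1 : FractionalIdeal (𝓞 F)⁰ F)
          have hib : i * b ∈ (1 : FractionalIdeal (𝓞 F)⁰ F) :=
            (FractionalIdeal.mem_inv_iff ha).mp hi b hb
          have hjc : j * c ∈ (1 : FractionalIdeal (𝓞 F)⁰ F) :=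
            (FractionalIdeal.mem_inv_iff ha).mp hj c hc
          have heqx : i * j * b * c = (i * b) * (j * c) := by ring
          rw [heqx]
          exact one_mul_mem hib hjc
        · show (u + v') * b * c ∈ (1 : FractionalIdeal (𝓞 F)⁰ F)
          have heqx : (u + v') * b * c = u * b * c + v' * b * c := by ring
          rw [heqx]
          exact fi_add_mem hu hv'
      set μ : 𝓞 F := v ^ 2 * (1 + lam + lam ^ 2 + lam ^ 3) with hμdef
      have hμF : algebraMap (𝓞 F) F μ = vF ^ 2 * (1 + lamF + lamF ^ 2 + lamF ^ 3) := by
        rw [hμdef, map_mul, map_pow, map_add, map_add, map_add, map_one, map_pow, map_pow, ← hlamF, ← hvF]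
      have e14 : 4 * n' = lamF ^ 4 * t ^ 2 + D := by
        rw [hn', ht']
        ring
      have hid : n' * b * c = n * (lamF ^ 2 * b) * (lamF ^ 2 * c)
          + algebraMap (𝓞 F) F μ * (D * b * c) := by
        rw [hμF]
        linear_combination (b * c / 4) * e14 + (lamF ^ 4 * b * c / 4) * hdiscF
          + (D * b * c * (1 + lamF + lamF ^ 2 + lamF ^ 3) / 4) * h1F
      rw [hid]
      exact fi_add_mem hm2 (fi_smul_mem μ hD1)
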